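/- Let n ≥ 2 and let F be an n×n real column-stochastic matrix with block form F = [[F₁₁, 0],[cᵀ, 1]], where F₁₁ is a nonnegative (n−1)×(n−1) irreducible matrix, c ∈ ℝ^{n−1} is nonnegative with c ≠ 0, and c_j + ∑_i (F₁₁)_{ij} = 1 for each j. Then for every vector x ∈ ℝⁿ, as k → ∞ the last coordinate of F^k x converges to the total sum ∑_{i=1}^n x_i, and every other coordinate of F^k x converges to 0. (In particular, the pure cash hoarder asymptotically absorbs the entire monetary base of the economy.) -/

import Mathlib

open Matrix Finset Filter Topology

/-- A nonnegative square matrix is irreducible: every entry of some power is positive. -/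
def MatrixIrreducible {m : Type*} [Fintype m] [DecidableEq m] (A : Matrix m m ℝ) : Prop :=
  ∀ i j, ∃ k : ℕ, 1 ≤ k ∧ 0 < (A ^ k) i j

section Aux

variable {m : ℕ} {A : Matrix (Fin m) (Fin m) ℝ}

lemma pow_entry_nonneg (hA : ∀ i j, 0 ≤ A i j) (k : ℕ) :
    ∀ i j, 0 ≤ (A ^ k) i j := by
  induction k with
  | zero => intro i j; simp [Matrix.one_apply]; split <;> norm_num
  | succ k ih =>
    intro i j
    rw [pow_succ, Matrix.mul_apply]
    exact Finset.sum_nonneg fun l _ => mul_nonneg (ih i l) (hA l j)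

/-- Column sum of `A ^ k`. -/
noncomputable def colSum (A : Matrix (Fin m) (Fin m) ℝ) (k : ℕ) (j : Fin m) : ℝ :=
  ∑ i, (A ^ k) i j

lemma colSum_nonneg (hA : ∀ i j, 0 ≤ A i j) (k : ℕ) (j : Fin m) :
    0 ≤ colSum A k j :=
  Finset.sum_nonneg fun i _ => pow_entry_nonneg hA k i j

lemma colSum_zero (j : Fin m) : colSum A 0 j = 1 := by
  simp [colSum, Matrix.one_apply]

lemma colSum_add (a b : ℕ) (j : Fin m) :
    colSum A (a + b) j = ∑ l, colSum A a l * (A ^ b) l j := by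
  simp only [colSum, pow_add, Matrix.mul_apply]
  rw [Finset.sum_comm]
  simp [Finset.sum_mul]

lemma colSum_le_one (hA : ∀ i j, 0 ≤ A i j) (h1 : ∀ j, colSum A 1 j ≤ 1) :
    ∀ k j, colSum A k j ≤ 1 := by
  intro k
  induction k with
  | zero => intro j; simp [colSum_zero]
  | succ k ih =>
    intro j
    rw [show k + 1 = k + 1 from rfl, colSum_add k 1 j]
    calc ∑ l, colSum A k l * (A ^ 1) l j
        ≤ ∑ l, 1 * (A ^ 1) l j := by
          refine Finset.sum_le_sum fun l _ => ?_
          exact mul_le_mul_of_nonneg_right (ih l) (pow_entry_nonneg hA 1 l j)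
      _ = colSum A 1 j := by simp [colSum]
      _ ≤ 1 := h1 j

lemma colSum_add_le (hA : ∀ i j, 0 ≤ A i j) (h1 : ∀ j, colSum A 1 j ≤ 1)
    (a b : ℕ) (j : Fin m) : colSum A (a + b) j ≤ colSum A b j := by
  rw [colSum_add]
  calc ∑ l, colSum A a l * (A ^ b) l j
      ≤ ∑ l, 1 * (A ^ b) l j := by
        refine Finset.sum_le_sum fun l _ => ?_
        exact mul_le_mul_of_nonneg_right (colSum_le_one hA h1 a l)
          (pow_entry_nonneg hA b l j)
    _ = colSum A b j := by simp [colSum]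

end Aux

/-- With a pure cash hoarder as the last agent and a strongly connected
sub-economy, the last coordinate of `F^k x` converges to the total sum of the
coordinates of `x`, and every other coordinate converges to `0`. -/
theorem cash_hoarder_absorbs_all (m : ℕ) (hm : 1 ≤ m)
    (A : Matrix (Fin m) (Fin m) ℝ) (c : Fin m → ℝ)
    (hA : ∀ i j, 0 ≤ A i j) (hc : ∀ j, 0 ≤ c j) (hcne : c ≠ 0)
    (hcol : ∀ j, c j + ∑ i, A i j = 1)
    (hirr : MatrixIrreducible A)
    (F : Matrix (Fin m ⊕ Unit) (Fin m ⊕ Unit) ℝ)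
    (hF : F = Matrix.fromBlocks A 0 (Matrix.replicateRow Unit c) 1)
    (x : Fin m ⊕ Unit → ℝ) :
    Filter.Tendsto (fun k : ℕ => (F ^ k).mulVec x (Sum.inr ()))
        Filter.atTop (nhds (∑ i, x i)) ∧
      ∀ i : Fin m,
        Filter.Tendsto (fun k : ℕ => (F ^ k).mulVec x (Sum.inl i))
          Filter.atTop (nhds 0) := by
  classical
  -- basic facts
  have h1 : ∀ j, colSum A 1 j ≤ 1 := by
    intro j
    have := hcol j
    have : colSum A 1 j = 1 - c j := by
      simp [colSum]; linarith
    rw [this]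
    linarith [hc j]
  -- a column with positive c
  obtain ⟨j0, hj0⟩ : ∃ j, 0 < c j := by
    by_contra h
    push_neg at h
    apply hcne
    funext j
    exact le_antisymm (h j) (hc j)
  have inst : Nonempty (Fin m) := ⟨j0⟩
  -- for every j, some column sum drops below 1
  have hdrop : ∀ j : Fin m, ∃ k : ℕ, colSum A k j < 1 := by
    intro j
    obtain ⟨k, hk1, hkpos⟩ := hirr j0 j
    refine ⟨1 + k, ?_⟩
    rw [colSum_add]
    have hs1j0 : colSum A 1 j0 = 1 - c j0 := by
      simp [colSum]; linarith [hcol j0]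
    calc ∑ l, colSum A 1 l * (A ^ k) l j
        = colSum A 1 j0 * (A ^ k) j0 j
            + ∑ l ∈ Finset.univ.erase j0, colSum A 1 l * (A ^ k) l j :=
          (Finset.add_sum_erase _ _ (Finset.mem_univ j0)).symm
      _ ≤ (1 - c j0) * (A ^ k) j0 j
            + ∑ l ∈ Finset.univ.erase j0, 1 * (A ^ k) l j := by
          rw [hs1j0]
          gcongr with l hl
          · exact pow_entry_nonneg hA k l j
          · exact h1 l
      _ = colSum A k j - c j0 * (A ^ k) j0 j := by
          have : colSum A k j = (A ^ k) j0 j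
              + ∑ l ∈ Finset.univ.erase j0, (A ^ k) l j :=
            (Finset.add_sum_erase _ _ (Finset.mem_univ j0)).symm
          rw [this]; ring
      _ < colSum A k j := by
          have := mul_pos hj0 hkpos
          linarith
      _ ≤ 1 := colSum_le_one hA h1 k j
  -- choose a uniform power N
  choose kf hkf using hdrop
  set N : ℕ := (Finset.univ.sup kf) + 1 with hN
  have hNpos : 0 < N := Nat.succ_pos _
  have hsN : ∀ j, colSum A N j < 1 := by
    intro j
    have hle : kf j ≤ Finset.univ.sup kf := Finset.le_sup (Finset.mem_univ j)
    have : colSum A N j ≤ colSum A (kf j) j := by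
      have : N = (N - kf j) + kf j := by omega
      rw [this]
      exact colSum_add_le hA h1 _ _ j
    exact lt_of_le_of_lt this (hkf j)
  -- the contraction factor
  set θ : ℝ := Finset.univ.sup' Finset.univ_nonempty (fun j => colSum A N j) with hθ
  have hθ1 : θ < 1 := by
    rw [hθ, Finset.sup'_lt_iff]
    intro j _
    exact hsN j
  have hθ0 : 0 ≤ θ := le_trans (colSum_nonneg hA N j0)
    (Finset.le_sup' _ (Finset.mem_univ j0))
  have hθle : ∀ j, colSum A N j ≤ θ := fun j => Finset.le_sup' _ (Finset.mem_univ j)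
  -- geometric decay along multiples of N
  have hgeom : ∀ p : ℕ, ∀ j, colSum A (p * N) j ≤ θ ^ p := by
    intro p
    induction p with
    | zero => intro j; simp [colSum_zero]
    | succ p ih =>
      intro j
      have : (p + 1) * N = N + p * N := by ring
      rw [this, colSum_add]
      calc ∑ l, colSum A N l * (A ^ (p * N)) l j
          ≤ ∑ l, θ * (A ^ (p * N)) l j := by
            refine Finset.sum_le_sum fun l _ => ?_
            exact mul_le_mul_of_nonneg_right (hθle l) (pow_entry_nonneg hA _ l j)
        _ = θ * colSum A (p * N) j := by rw [← Finset.mul_sum]; rfl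
        _ ≤ θ * θ ^ p := mul_le_mul_of_nonneg_left (ih j) hθ0
        _ = θ ^ (p + 1) := by ring
  -- column sums tend to 0
  have hbound : ∀ k j, colSum A k j ≤ θ ^ (k / N) := by
    intro k j
    have hk : k = k % N + (k / N) * N := by
      rw [Nat.mod_add_div']
    calc colSum A k j = colSum A (k % N + (k / N) * N) j := by rw [← hk]
      _ ≤ colSum A ((k / N) * N) j := colSum_add_le hA h1 _ _ j
      _ ≤ θ ^ (k / N) := hgeom _ j
  have hdivtop : Filter.Tendsto (fun k : ℕ => k / N) Filter.atTop Filter.atTop := by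
    apply Filter.tendsto_atTop.mpr
    intro b
    filter_upwards [Filter.eventually_ge_atTop (b * N)] with k hk
    exact Nat.le_div_iff_mul_le hNpos |>.mpr hk
  have hθtend : Filter.Tendsto (fun k : ℕ => θ ^ (k / N)) Filter.atTop (nhds 0) :=
    (tendsto_pow_atTop_nhds_zero_of_lt_one hθ0 hθ1).comp hdivtop
  have hcoltend : ∀ j, Filter.Tendsto (fun k : ℕ => colSum A k j)
      Filter.atTop (nhds 0) := by
    intro j
    refine squeeze_zero (fun k => colSum_nonneg hA k j) (fun k => hbound k j) hθtend
  -- entrywise convergence to 0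
  have hentry : ∀ i j, Filter.Tendsto (fun k : ℕ => (A ^ k) i j)
      Filter.atTop (nhds 0) := by
    intro i j
    refine squeeze_zero (fun k => pow_entry_nonneg hA k i j) (fun k => ?_) (hcoltend j)
    exact Finset.single_le_sum (fun l _ => pow_entry_nonneg hA k l j) (Finset.mem_univ i)
  -- block structure of F ^ k
  have hblock : ∀ k : ℕ, ∃ B : Matrix Unit (Fin m) ℝ,
      F ^ k = Matrix.fromBlocks (A ^ k) 0 B 1 := by
    intro k
    induction k with
    | zero =>
      exact ⟨0, by simp [Matrix.fromBlocks_one]⟩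
    | succ k ih =>
      obtain ⟨B, hB⟩ := ih
      refine ⟨Matrix.replicateRow Unit c * A ^ k + B, ?_⟩
      rw [pow_succ', hB, hF, Matrix.fromBlocks_multiply, ← pow_succ']
      simp
  -- top coordinates tend to 0
  have htop : ∀ i : Fin m,
      Filter.Tendsto (fun k : ℕ => (F ^ k).mulVec x (Sum.inl i))
        Filter.atTop (nhds 0) := by
    intro i
    have heq : ∀ k : ℕ, (F ^ k).mulVec x (Sum.inl i)
        = ∑ j, (A ^ k) i j * x (Sum.inl j) := by
      intro k
      obtain ⟨B, hB⟩ := hblock k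
      rw [hB]
      simp [Matrix.mulVec, dotProduct, Fintype.sum_sum_type]
    simp only [heq]
    have : Filter.Tendsto (fun k : ℕ => ∑ j, (A ^ k) i j * x (Sum.inl j))
        Filter.atTop (nhds (∑ j : Fin m, 0 * x (Sum.inl j))) := by
      apply tendsto_finset_sum
      intro j _
      exact (hentry i j).mul_const _
    simpa using this
  refine ⟨?_, htop⟩
  -- column sums of F are 1, so total is preserved
  have hFcol : ∀ j : Fin m ⊕ Unit, ∑ i, F i j = 1 := by
    intro j
    rw [hF]
    cases j with
    | inl j =>
      rw [Fintype.sum_sum_type]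
      simp only [Finset.univ_unique, Finset.sum_singleton,
        Matrix.fromBlocks_apply₁₁, Matrix.fromBlocks_apply₂₁, Matrix.replicateRow_apply]
      linarith [hcol j]
    | inr u =>
      rw [Fintype.sum_sum_type]
      simp [Matrix.one_apply]
  have hsum : ∀ k : ℕ, ∑ i, (F ^ k).mulVec x i = ∑ i, x i := by
    intro k
    induction k with
    | zero => simp
    | succ k ih =>
      rw [pow_succ', ← Matrix.mulVec_mulVec]
      calc ∑ i, F.mulVec ((F ^ k).mulVec x) i
          = ∑ j, (∑ i, F i j) * (F ^ k).mulVec x j := by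
            simp only [Matrix.mulVec, dotProduct, Finset.sum_mul]
            exact Finset.sum_comm
        _ = ∑ j, (F ^ k).mulVec x j := by
            refine Finset.sum_congr rfl fun j _ => ?_
            rw [hFcol j, one_mul]
        _ = ∑ i, x i := ih
  have hlast : ∀ k : ℕ, (F ^ k).mulVec x (Sum.inr ())
      = (∑ i, x i) - ∑ i : Fin m, (F ^ k).mulVec x (Sum.inl i) := by
    intro k
    have := hsum k
    rw [Fintype.sum_sum_type] at this
    simp only [Finset.univ_unique, Finset.sum_singleton] at this
    linarith [this]
  simp only [hlast]
  have hsumtop : Filter.Tendsto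
      (fun k : ℕ => ∑ i : Fin m, (F ^ k).mulVec x (Sum.inl i))
      Filter.atTop (nhds 0) := by
    have : Filter.Tendsto
        (fun k : ℕ => ∑ i : Fin m, (F ^ k).mulVec x (Sum.inl i))
        Filter.atTop (nhds (∑ i : Fin m, (0 : ℝ))) :=
      tendsto_finset_sum _ fun i _ => htop i
    simpa using this
  have := (tendsto_const_nhds (x := (∑ i, x i)) (f := Filter.atTop (α := ℕ))).sub hsumtop
  simpa using this
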